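/- Let n ≥ 1 and let M : ℝⁿ → vec be an n-parameter persistence module. Then M is finitely presentable if and only if there exists a finite grid 𝒫 ⊆ ℝⁿ such that M ≅ M_𝒫, the restriction-extension of M along 𝒫. -/

import Mathlib

/-- A pointwise finite dimensional persistence module over a poset `P`, with coefficients in
the field `k`: a functor from `P` to finite dimensional `k`-vector spaces. -/
structure PersMod (k : Type) [Field k] (P : Type) [PartialOrder P] : Type 1 where
  carrier : P → Type
  [addCommGroup : ∀ x, AddCommGroup (carrier x)]
  [module : ∀ x, Module k (carrier x)]
  [fd : ∀ x, FiniteDimensional k (carrier x)]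
  map : ∀ {x y : P}, x ≤ y → (carrier x →ₗ[k] carrier y)
  map_id : ∀ x : P, map (le_refl x) = LinearMap.id
  map_comp : ∀ {x y z : P} (h₁ : x ≤ y) (h₂ : y ≤ z),
      map (h₁.trans h₂) = (map h₂).comp (map h₁)

attribute [instance] PersMod.addCommGroup PersMod.module PersMod.fd

namespace PersMod

section Core

variable {k : Type} [Field k] {P : Type} [PartialOrder P]

/-- A morphism of persistence modules (a natural transformation). -/
structure Hom (M N : PersMod k P) where
  app : ∀ x, M.carrier x →ₗ[k] N.carrier x
  natural : ∀ {x y : P} (h : x ≤ y), (app y).comp (M.map h) = (N.map h).comp (app x)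

theorem Hom.ext' {M N : PersMod k P} {f g : Hom M N} (h : ∀ x, f.app x = g.app x) :
    f = g := by
  cases f; cases g
  have : _ = _ := funext h
  subst this
  rfl

/-- Two persistence modules are isomorphic. -/
def Isom (M N : PersMod k P) : Prop :=
  ∃ (f : Hom M N) (g : Hom N M),
    (∀ x, (g.app x).comp (f.app x) = LinearMap.id) ∧
    (∀ x, (f.app x).comp (g.app x) = LinearMap.id)

/-- The zero persistence module(s). -/
def IsZeroMod (M : PersMod k P) : Prop := ∀ x, Subsingleton (M.carrier x)

/-- The direct sum of two persistence modules. -/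
def dsum (M N : PersMod k P) : PersMod k P where
  carrier x := M.carrier x × N.carrier x
  map h := (M.map h).prodMap (N.map h)
  map_id x := by
    refine LinearMap.ext fun v => ?_
    simp [M.map_id, N.map_id]
  map_comp h₁ h₂ := by
    refine LinearMap.ext fun v => ?_
    simp [M.map_comp h₁ h₂, N.map_comp h₁ h₂]

/-- A persistence module is indecomposable if it is nonzero and in any way of writing it as
a direct sum of two modules, one of the summands is zero. -/
def Indecomposable (M : PersMod k P) : Prop :=
  ¬ IsZeroMod M ∧ ∀ A B : PersMod k P, Isom M (dsum A B) → IsZeroMod A ∨ IsZeroMod B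

end Core

section Interleaving

variable {k : Type} [Field k] {n : ℕ}

/-- A point of `ℝⁿ`. -/
abbrev Pt (n : ℕ) := Fin n → ℝ

/-- The shift of a point of `ℝⁿ` by `ε` in every coordinate. -/
def shiftPt (r : Pt n) (ε : ℝ) : Pt n := fun i => r i + ε

lemma le_shiftPt (r : Pt n) {ε : ℝ} (hε : 0 ≤ ε) : r ≤ shiftPt r ε :=
  fun _ => le_add_of_nonneg_right hε

lemma shiftPt_mono {r s : Pt n} (h : r ≤ s) (ε : ℝ) : shiftPt r ε ≤ shiftPt s ε :=
  fun i => by show r i + ε ≤ s i + ε; linarith [h i]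

/-- An `ε`-interleaving between two persistence modules over `ℝⁿ`: morphisms
`f : M → N[ε]` and `g : N → M[ε]` whose composites are the `2ε`-shift morphisms. -/
def Interleaved (M N : PersMod k (Pt n)) (ε : ℝ) : Prop :=
  0 ≤ ε ∧
  ∃ (f : ∀ x : Pt n, M.carrier x →ₗ[k] N.carrier (shiftPt x ε))
    (g : ∀ x : Pt n, N.carrier x →ₗ[k] M.carrier (shiftPt x ε)),
    (∀ (x y : Pt n) (h : x ≤ y),
        (f y).comp (M.map h) = (N.map (shiftPt_mono h ε)).comp (f x)) ∧
    (∀ (x y : Pt n) (h : x ≤ y),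
        (g y).comp (N.map h) = (M.map (shiftPt_mono h ε)).comp (g x)) ∧
    (∀ (x : Pt n) (h : x ≤ shiftPt (shiftPt x ε) ε),
        (g (shiftPt x ε)).comp (f x) = M.map h) ∧
    (∀ (x : Pt n) (h : x ≤ shiftPt (shiftPt x ε) ε),
        (f (shiftPt x ε)).comp (g x) = N.map h)

/-- The interleaving distance, with value `∞` if no interleaving exists. -/
noncomputable def dI (M N : PersMod k (Pt n)) : ENNReal :=
  sInf (ENNReal.ofReal '' {ε : ℝ | Interleaved M N ε})

/-- `M` is `ε`-trivial if all structure maps `M(r) → M(r+ε)` vanish. -/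
def EpsTrivial (M : PersMod k (Pt n)) (ε : ℝ) : Prop :=
  0 ≤ ε ∧ ∀ (r : Pt n) (h : r ≤ shiftPt r ε), M.map h = 0

/-- `M` is strictly `ε`-trivial if it is `ε'`-trivial for some `ε' < ε`. -/
def StrictlyEpsTrivial (M : PersMod k (Pt n)) (ε : ℝ) : Prop :=
  ∃ ε' < ε, EpsTrivial M ε'

/-- `M` is `ε`-indecomposable if it is the direct sum of an indecomposable module and a
strictly `ε`-trivial module. -/
def EpsIndecomposable (M : PersMod k (Pt n)) (ε : ℝ) : Prop :=
  ∃ A B : PersMod k (Pt n), Indecomposable A ∧ StrictlyEpsTrivial B ε ∧ Isom M (dsum A B)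

end Interleaving

section FinitelyPresentable

variable {k : Type} [Field k] {P : Type} [PartialOrder P]

/-- The submodule of `k` underlying the value of the free module `P_q` at `s`:
everything if `q ≤ s`, zero otherwise. -/
noncomputable def pSub (k : Type) [Field k] (q s : P) : Submodule k k :=
  @ite _ (q ≤ s) (Classical.propDecidable _) ⊤ ⊥

lemma pSub_mono (q : P) {s t : P} (h : s ≤ t) : pSub k q s ≤ pSub k q t := by
  unfold pSub
  split_ifs with h1 h2
  · exact le_rfl
  · exact absurd (h1.trans h) h2
  · exact bot_le
  · exact bot_le

/-- The free persistence module `P_q` generated at `q`: it has value `k` at `s ≥ q` and `0`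
elsewhere, with identity structure maps wherever possible. -/
noncomputable def Pmod (k : Type) [Field k] (q : P) : PersMod k P where
  carrier s := ↥(pSub k q s)
  map h := Submodule.inclusion (pSub_mono q h)
  map_id s := rfl
  map_comp h₁ h₂ := rfl

/-- Finite direct sums of persistence modules. -/
def fdsum {ι : Type} [Fintype ι] (Ms : ι → PersMod k P) : PersMod k P where
  carrier x := ∀ i, (Ms i).carrier x
  map h := LinearMap.pi fun i => ((Ms i).map h).comp (LinearMap.proj i)
  map_id x := by
    refine LinearMap.ext fun v => funext fun i => ?_
    simp [(Ms i).map_id]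
  map_comp h₁ h₂ := by
    refine LinearMap.ext fun v => funext fun i => ?_
    simp [(Ms i).map_comp h₁ h₂]

/-- The cokernel of a morphism of persistence modules. -/
noncomputable def cokerMod {M N : PersMod k P} (f : Hom M N) : PersMod k P where
  carrier x := N.carrier x ⧸ LinearMap.range (f.app x)
  map {x y} h := Submodule.mapQ _ _ (N.map h) (by
    rintro v hv
    obtain ⟨w, rfl⟩ := LinearMap.mem_range.mp hv
    simp only [Submodule.mem_comap, LinearMap.mem_range]
    refine ⟨M.map h w, ?_⟩
    have hnat := f.natural h
    calc (f.app y) (M.map h w) = ((f.app y).comp (M.map h)) w := rfl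
      _ = ((N.map h).comp (f.app x)) w := by rw [hnat]
      _ = N.map h (f.app x w) := rfl)
  map_id x := by
    refine LinearMap.ext fun v => ?_
    obtain ⟨w, rfl⟩ := Submodule.Quotient.mk_surjective _ v
    rw [Submodule.mapQ_apply, N.map_id]
    rfl
  map_comp h₁ h₂ := by
    refine LinearMap.ext fun v => ?_
    obtain ⟨w, rfl⟩ := Submodule.Quotient.mk_surjective _ v
    simp [Submodule.mapQ_apply, N.map_comp h₁ h₂]

/-- A persistence module is finitely presentable if it is isomorphic to the cokernel of a
morphism between finite direct sums of free modules `P_p`. -/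
def FinitelyPresentable (M : PersMod k P) : Prop :=
  ∃ (ι κ : Type) (_ : Fintype ι) (_ : Fintype κ) (gp : ι → P) (rp : κ → P)
    (f : Hom (fdsum fun j => Pmod k (rp j)) (fdsum fun i => Pmod k (gp i))),
    Isom M (cokerMod f)

end FinitelyPresentable

section FiniteGrid

variable {k : Type} [Field k] {n : ℕ}

/-- `r` dominates some point of the finite grid `Sⁿ`. -/
def finDom (S : Finset ℝ) (r : Pt n) : Prop := ∀ i, ∃ a ∈ S, a ≤ r i

lemma finDom_mono {S : Finset ℝ} {r r' : Pt n} (hd : finDom S r) (h : r ≤ r') :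
    finDom S r' := fun i => by
  obtain ⟨a, ha, hle⟩ := hd i
  exact ⟨a, ha, hle.trans (h i)⟩

/-- The largest point of the finite grid `Sⁿ` below `r` (junk value if there is none). -/
noncomputable def finSup (S : Finset ℝ) (r : Pt n) : Pt n := fun i =>
  if h : (S.filter (· ≤ r i)).Nonempty then (S.filter (· ≤ r i)).max' h else 0

lemma finSup_le {S : Finset ℝ} {r : Pt n} (hd : finDom S r) : finSup S r ≤ r := by
  intro i
  obtain ⟨a, ha, hle⟩ := hd i
  have hne : (S.filter (· ≤ r i)).Nonempty := ⟨a, Finset.mem_filter.mpr ⟨ha, hle⟩⟩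
  rw [finSup, dif_pos hne]
  have := (S.filter (· ≤ r i)).max'_mem hne
  exact (Finset.mem_filter.mp this).2

lemma finSup_mono {S : Finset ℝ} {r r' : Pt n} (hd : finDom S r) (h : r ≤ r') :
    finSup S r ≤ finSup S r' := by
  intro i
  obtain ⟨a, ha, hle⟩ := hd i
  have hne : (S.filter (· ≤ r i)).Nonempty := ⟨a, Finset.mem_filter.mpr ⟨ha, hle⟩⟩
  have hne' : (S.filter (· ≤ r' i)).Nonempty :=
    ⟨a, Finset.mem_filter.mpr ⟨ha, hle.trans (h i)⟩⟩
  simp only [finSup]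
  rw [dif_pos hne, dif_pos hne']
  refine Finset.max'_subset hne ?_
  intro b hb
  rw [Finset.mem_filter] at hb ⊢
  exact ⟨hb.1, hb.2.trans (h i)⟩

/-- The submodule underlying the restriction-extension at `r`: everything if there is a grid
point below `r` (so that the value there is `M(sup{p ∈ Sⁿ : p ≤ r})`), zero otherwise. -/
noncomputable def finExtSub (S : Finset ℝ) (M : PersMod k (Pt n)) (r : Pt n) :
    Submodule k (M.carrier (finSup S r)) :=
  @ite _ (finDom S r) (Classical.propDecidable _) ⊤ ⊥

/-- The restriction-extension `M_𝒫` of a persistence module `M : ℝⁿ → vec` along the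
finite grid `𝒫 = Sⁿ`: its value at `r` is `M(sup{p ∈ Sⁿ : p ≤ r})` if there is a grid
point below `r`, and `0` otherwise, with the structure maps induced by those of `M`. -/
noncomputable def finRestExt (S : Finset ℝ) (M : PersMod k (Pt n)) : PersMod k (Pt n) where
  carrier r := ↥(finExtSub S M r)
  map {r r'} h :=
    @dite _ (finDom S r) (Classical.propDecidable _)
      (fun hd =>
        (M.map (finSup_mono hd h)).restrict (p := finExtSub S M r) (q := finExtSub S M r')
          (fun x _ => by
            have hd' := finDom_mono hd h
            simp [finExtSub, if_pos hd']))
      (fun _ => 0)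
  map_id r := by
    by_cases hd : finDom S r
    · rw [dif_pos hd]
      refine LinearMap.ext fun x => ?_
      apply Subtype.ext
      rw [LinearMap.restrict_apply]
      have h1 : M.map (finSup_mono hd (le_refl r)) = LinearMap.id := M.map_id _
      rw [h1]
      rfl
    · rw [dif_neg hd]
      refine LinearMap.ext fun x => ?_
      have hx0 : x = 0 := by
        apply Subtype.ext
        have := x.2
        simpa [finExtSub, if_neg hd] using this
      rw [hx0]
      simp
  map_comp {r r' r''} h₁ h₂ := by
    by_cases hd : finDom S r
    · have hd' := finDom_mono hd h₁
      rw [dif_pos hd, dif_pos hd, dif_pos hd']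
      refine LinearMap.ext fun x => ?_
      apply Subtype.ext
      simp only [LinearMap.coe_comp, Function.comp_apply, LinearMap.restrict_apply]
      have h3 : M.map ((finSup_mono hd h₁).trans (finSup_mono hd' h₂)) =
          (M.map (finSup_mono hd' h₂)).comp (M.map (finSup_mono hd h₁)) := M.map_comp _ _
      calc (M.map (finSup_mono hd (h₁.trans h₂))) x.1
          = (M.map ((finSup_mono hd h₁).trans (finSup_mono hd' h₂))) x.1 := rfl
        _ = (M.map (finSup_mono hd' h₂)) ((M.map (finSup_mono hd h₁)) x.1) := by
            rw [h3]; rfl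
    · rw [dif_neg hd, dif_neg hd]
      refine LinearMap.ext fun x => ?_
      simp

end FiniteGrid

end PersMod

namespace PersMod

variable {k : Type} [Field k] {P : Type} [PartialOrder P]

theorem isomRefl (M : PersMod k P) : Isom M M :=
  ⟨⟨fun _ => LinearMap.id, fun h => by simp⟩, ⟨fun _ => LinearMap.id, fun h => by simp⟩,
    fun x => by simp, fun x => by simp⟩

theorem isomSymm {M N : PersMod k P} (h : Isom M N) : Isom N M := by
  obtain ⟨f, g, h1, h2⟩ := h
  exact ⟨g, f, h2, h1⟩

theorem isomTrans {M N L : PersMod k P} (h : Isom M N) (h' : Isom N L) : Isom M L := by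
  obtain ⟨f, g, h1, h2⟩ := h
  obtain ⟨f', g', h1', h2'⟩ := h'
  refine ⟨⟨fun x => (f'.app x).comp (f.app x), fun {x y} hxy => ?_⟩,
    ⟨fun x => (g.app x).comp (g'.app x), fun {x y} hxy => ?_⟩, fun x => ?_, fun x => ?_⟩
  · rw [LinearMap.comp_assoc, f.natural hxy, ← LinearMap.comp_assoc, f'.natural hxy,
      LinearMap.comp_assoc]
  · rw [LinearMap.comp_assoc, g'.natural hxy, ← LinearMap.comp_assoc, g.natural hxy,
      LinearMap.comp_assoc]
  · refine LinearMap.ext fun v => ?_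
    have e1 := LinearMap.congr_fun (h1' x) (f.app x v)
    have e2 := LinearMap.congr_fun (h1 x) v
    simp only [LinearMap.comp_apply, LinearMap.id_apply] at e1 e2 ⊢
    rw [e1, e2]
  · refine LinearMap.ext fun v => ?_
    have e1 := LinearMap.congr_fun (h2 x) (g'.app x v)
    have e2 := LinearMap.congr_fun (h2' x) v
    simp only [LinearMap.comp_apply, LinearMap.id_apply] at e1 e2 ⊢
    rw [e1, e2]

/-- If a morphism of persistence modules is pointwise bijective, the modules are isomorphic. -/
theorem isomOfBijective {M N : PersMod k P} (f : Hom M N)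
    (hb : ∀ x, Function.Bijective (f.app x)) : Isom M N := by
  let e : ∀ x, M.carrier x ≃ₗ[k] N.carrier x := fun x => LinearEquiv.ofBijective _ (hb x)
  refine ⟨f, ⟨fun x => (e x).symm.toLinearMap, fun {x y} hxy => ?_⟩, fun x => ?_, fun x => ?_⟩
  · refine LinearMap.ext fun v => ?_
    apply (hb y).1
    have hnat := LinearMap.congr_fun (f.natural hxy) ((e x).symm v)
    simp only [LinearMap.comp_apply] at hnat ⊢
    have h1 : f.app y ((e y).symm (N.map hxy v)) = N.map hxy v :=
      (e y).apply_symm_apply (N.map hxy v)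
    have h2 : f.app x ((e x).symm v) = v := (e x).apply_symm_apply v
    show f.app y ((e y).symm (N.map hxy v)) = f.app y (M.map hxy ((e x).symm v))
    rw [h1, hnat, h2]
  · refine LinearMap.ext fun v => ?_
    exact (e x).symm_apply_apply v
  · refine LinearMap.ext fun v => ?_
    exact (e x).apply_symm_apply v

end PersMod
namespace PersMod

variable {k : Type} [Field k] {n : ℕ}

lemma finDom_of_le {S : Finset ℝ} {q r : Pt n} (hq : ∀ i, q i ∈ S) (h : q ≤ r) :
    finDom S r := fun i => ⟨q i, hq i, h i⟩

lemma le_finSup {S : Finset ℝ} {q r : Pt n} (hq : ∀ i, q i ∈ S) (h : q ≤ r) :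
    q ≤ finSup S r := by
  intro i
  have hmem : q i ∈ S.filter (· ≤ r i) := Finset.mem_filter.mpr ⟨hq i, h i⟩
  have hne : (S.filter (· ≤ r i)).Nonempty := ⟨q i, hmem⟩
  rw [finSup, dif_pos hne]
  exact Finset.le_max' _ _ hmem

lemma grid_le_iff {S : Finset ℝ} {q r : Pt n} (hq : ∀ i, q i ∈ S) (hd : finDom S r) :
    q ≤ r ↔ q ≤ finSup S r :=
  ⟨fun h => le_finSup hq h, fun h => h.trans (finSup_le hd)⟩

lemma finSup_mem {S : Finset ℝ} {r : Pt n} (hd : finDom S r) (i : Fin n) :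
    finSup S r i ∈ S := by
  obtain ⟨a, ha, hle⟩ := hd i
  have hmem : a ∈ S.filter (· ≤ r i) := Finset.mem_filter.mpr ⟨ha, hle⟩
  have hne : (S.filter (· ≤ r i)).Nonempty := ⟨a, hmem⟩
  rw [finSup, dif_pos hne]
  exact (Finset.mem_filter.mp ((S.filter (· ≤ r i)).max'_mem hne)).1

/-- `M` is determined by the finite grid `Sⁿ`. -/
def GridDet (S : Finset ℝ) (M : PersMod k (Pt n)) : Prop :=
  (∀ (r : Pt n) (hd : finDom S r), Function.Bijective (M.map (finSup_le hd))) ∧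
  (∀ r : Pt n, ¬ finDom S r → Subsingleton (M.carrier r))

lemma finExtSub_subsingleton {S : Finset ℝ} (M : PersMod k (Pt n)) {r : Pt n}
    (hnd : ¬ finDom S r) : Subsingleton (↥(finExtSub S M r)) := by
  constructor
  rintro ⟨a, ha⟩ ⟨b, hb⟩
  rw [finExtSub, if_neg hnd] at ha hb
  exact Subtype.ext ((Submodule.mem_bot k).mp ha |>.trans ((Submodule.mem_bot k).mp hb).symm)

/-- The component of the canonical comparison morphism `M_𝒫 → M`. -/
noncomputable def restExtApp (S : Finset ℝ) (M : PersMod k (Pt n)) (r : Pt n) :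
    (finRestExt S M).carrier r →ₗ[k] M.carrier r :=
  @dite _ (finDom S r) (Classical.propDecidable _)
    (fun hd => (M.map (finSup_le hd)).comp (finExtSub S M r).subtype) (fun _ => 0)

lemma restExtApp_pos {S : Finset ℝ} (M : PersMod k (Pt n)) {r : Pt n} (hd : finDom S r) :
    restExtApp S M r = (M.map (finSup_le hd)).comp (finExtSub S M r).subtype := by
  rw [restExtApp, dif_pos hd]
  rfl

lemma restExtApp_neg {S : Finset ℝ} (M : PersMod k (Pt n)) {r : Pt n} (hnd : ¬ finDom S r) :
    restExtApp S M r = 0 := by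
  rw [restExtApp, dif_neg hnd]

lemma finRestExt_map_pos {S : Finset ℝ} (M : PersMod k (Pt n)) {r r' : Pt n} (h : r ≤ r')
    (hd : finDom S r) (x : (finRestExt S M).carrier r) :
    ((finRestExt S M).map h x).1 = M.map (finSup_mono hd h) x.1 := by
  show (((finRestExt S M).map h) x).1 = _
  unfold finRestExt
  dsimp only
  rw [dif_pos hd]
  rfl

lemma finRestExt_map_neg {S : Finset ℝ} (M : PersMod k (Pt n)) {r r' : Pt n} (h : r ≤ r')
    (hnd : ¬ finDom S r) : (finRestExt S M).map h = 0 := by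
  show ((finRestExt S M).map h) = 0
  unfold finRestExt
  dsimp only
  rw [dif_neg hnd]

/-- The canonical comparison morphism `M_𝒫 → M`. -/
noncomputable def restExtHom (S : Finset ℝ) (M : PersMod k (Pt n)) :
    Hom (finRestExt S M) M where
  app r := restExtApp S M r
  natural {r r'} h := by
    by_cases hd : finDom S r
    · have hd' := finDom_mono hd h
      refine LinearMap.ext fun x => ?_
      simp only [LinearMap.comp_apply, restExtApp_pos M hd, restExtApp_pos M hd']
      show M.map (finSup_le hd') ((finRestExt S M).map h x).1 =
        M.map h (M.map (finSup_le hd) x.1)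
      rw [finRestExt_map_pos M h hd x]
      rw [← LinearMap.comp_apply, ← M.map_comp, ← LinearMap.comp_apply, ← M.map_comp]
    · refine LinearMap.ext fun x => ?_
      simp only [LinearMap.comp_apply]
      rw [restExtApp_neg M hd, finRestExt_map_neg M h hd]
      simp

lemma restExtHom_bijective {S : Finset ℝ} {M : PersMod k (Pt n)} (hgd : GridDet S M)
    (r : Pt n) : Function.Bijective ((restExtHom S M).app r) := by
  show Function.Bijective (restExtApp S M r)
  by_cases hd : finDom S r
  · rw [restExtApp_pos M hd]
    constructor
    · exact (hgd.1 r hd).1.comp (Submodule.injective_subtype _)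
    · intro m
      obtain ⟨ms, hms⟩ := (hgd.1 r hd).2 m
      exact ⟨⟨ms, by simp [finExtSub, if_pos hd]⟩, hms⟩
  · rw [restExtApp_neg M hd]
    have h1 := finExtSub_subsingleton M hd
    haveI h1' : Subsingleton ((finRestExt S M).carrier r) := h1
    haveI h2 := hgd.2 r hd
    exact ⟨fun a b _ => Subsingleton.elim a b, fun m => ⟨0, Subsingleton.elim _ _⟩⟩

theorem isom_restExt_of_gridDet {S : Finset ℝ} {M : PersMod k (Pt n)} (hgd : GridDet S M) :
    Isom M (finRestExt S M) :=
  isomSymm (isomOfBijective (restExtHom S M) (restExtHom_bijective hgd))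

theorem gridDet_of_isom {S : Finset ℝ} {M N : PersMod k (Pt n)} (h : Isom M N)
    (hgd : GridDet S N) : GridDet S M := by
  obtain ⟨f, g, h1, h2⟩ := h
  have hfb : ∀ x, Function.Bijective (f.app x) := fun x => by
    refine Function.bijective_iff_has_inverse.mpr ⟨g.app x, fun v => ?_, fun v => ?_⟩
    · exact LinearMap.congr_fun (h1 x) v
    · exact LinearMap.congr_fun (h2 x) v
  have hgb : ∀ x, Function.Bijective (g.app x) := fun x => by
    refine Function.bijective_iff_has_inverse.mpr ⟨f.app x, fun v => ?_, fun v => ?_⟩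
    · exact LinearMap.congr_fun (h2 x) v
    · exact LinearMap.congr_fun (h1 x) v
  constructor
  · intro r hd
    have key : ∀ v, M.map (finSup_le hd) v =
        g.app r (N.map (finSup_le hd) (f.app (finSup S r) v)) := by
      intro v
      have hnat := LinearMap.congr_fun (f.natural (finSup_le hd)) v
      simp only [LinearMap.comp_apply] at hnat
      rw [← hnat]
      have := LinearMap.congr_fun (h1 r) (M.map (finSup_le hd) v)
      simp only [LinearMap.comp_apply, LinearMap.id_apply] at this
      rw [this]
    have heq : ⇑(M.map (finSup_le hd)) =
        (g.app r) ∘ (N.map (finSup_le hd)) ∘ (f.app (finSup S r)) := funext key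
    rw [heq]
    exact (hgb r).comp ((hgd.1 r hd).comp (hfb (finSup S r)))
  · intro r hnd
    have := hgd.2 r hnd
    constructor
    intro a b
    have ha := LinearMap.congr_fun (h1 r) a
    have hb := LinearMap.congr_fun (h1 r) b
    simp only [LinearMap.comp_apply, LinearMap.id_apply] at ha hb
    rw [← ha, ← hb, Subsingleton.elim (f.app r a) (f.app r b)]

end PersMod
namespace PersMod

section FreeLemmas

variable {k : Type} [Field k] {P : Type} [PartialOrder P]

lemma pSub_bot {q r : P} (h : ¬ q ≤ r) : pSub k q r = ⊥ := by rw [pSub, if_neg h]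

lemma pSub_top {q r : P} (h : q ≤ r) : pSub k q r = ⊤ := by rw [pSub, if_pos h]

lemma pmod_map_bijective {q x y : P} (h : x ≤ y) (hiff : q ≤ x ↔ q ≤ y) :
    Function.Bijective ((Pmod k q).map h) := by
  have heq : pSub k q x = pSub k q y := by
    by_cases hq : q ≤ x
    · rw [pSub_top hq, pSub_top (hiff.mp hq)]
    · rw [pSub_bot hq, pSub_bot fun hy => hq (hiff.mpr hy)]
  constructor
  · exact Submodule.inclusion_injective (pSub_mono q h)
  · rintro ⟨v, hv⟩
    exact ⟨⟨v, heq ▸ hv⟩, Subtype.ext rfl⟩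

lemma pmod_subsingleton {q r : P} (h : ¬ q ≤ r) : Subsingleton ((Pmod k q).carrier r) := by
  constructor
  rintro ⟨a, ha⟩ ⟨b, hb⟩
  rw [pSub_bot h] at ha hb
  exact Subtype.ext (((Submodule.mem_bot k).mp ha).trans ((Submodule.mem_bot k).mp hb).symm)

lemma fdsum_map_apply {ι : Type} [Fintype ι] (Ms : ι → PersMod k P) {x y : P} (h : x ≤ y)
    (v : (fdsum Ms).carrier x) (i : ι) :
    ((fdsum Ms).map h v) i = (Ms i).map h (v i) := rfl

lemma fdsum_map_bijective {ι : Type} [Fintype ι] (Ms : ι → PersMod k P) {x y : P} (h : x ≤ y)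
    (hb : ∀ i, Function.Bijective ((Ms i).map h)) :
    Function.Bijective ((fdsum Ms).map h) := by
  constructor
  · intro a b hab
    funext i
    exact (hb i).1 (congrFun hab i)
  · intro w
    exact ⟨fun i => Classical.choose ((hb i).2 (w i)),
      funext fun i => Classical.choose_spec ((hb i).2 (w i))⟩

lemma fdsum_subsingleton {ι : Type} [Fintype ι] (Ms : ι → PersMod k P) {x : P}
    (hs : ∀ i, Subsingleton ((Ms i).carrier x)) : Subsingleton ((fdsum Ms).carrier x) := by
  constructor
  intro a b
  funext i
  exact @Subsingleton.elim _ (hs i) _ _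

lemma coker_map_mk {M N : PersMod k P} (f : Hom M N) {x y : P} (h : x ≤ y) (w : N.carrier x) :
    (cokerMod f).map h (Submodule.Quotient.mk w) = Submodule.Quotient.mk (N.map h w) := rfl

lemma coker_map_bijective {M N : PersMod k P} (f : Hom M N) {x y : P} (h : x ≤ y)
    (hM : Function.Bijective (M.map h)) (hN : Function.Bijective (N.map h)) :
    Function.Bijective ((cokerMod f).map h) := by
  constructor
  · intro a b hab
    obtain ⟨va, rfl⟩ := Submodule.Quotient.mk_surjective _ a
    obtain ⟨vb, rfl⟩ := Submodule.Quotient.mk_surjective _ b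
    rw [coker_map_mk f h va, coker_map_mk f h vb] at hab
    have hmem : N.map h va - N.map h vb ∈ LinearMap.range (f.app y) :=
      (Submodule.Quotient.eq _).mp hab
    rw [← map_sub] at hmem
    obtain ⟨u, hu⟩ := hmem
    obtain ⟨u', rfl⟩ := hM.2 u
    have hnat := LinearMap.congr_fun (f.natural h) u'
    simp only [LinearMap.comp_apply] at hnat
    rw [hnat] at hu
    have hvv : f.app x u' = va - vb := hN.1 hu
    exact (Submodule.Quotient.eq _).mpr ⟨u', hvv⟩
  · intro z
    obtain ⟨w, rfl⟩ := Submodule.Quotient.mk_surjective _ z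
    obtain ⟨w', rfl⟩ := hN.2 w
    exact ⟨Submodule.Quotient.mk w', coker_map_mk f h w'⟩

lemma coker_subsingleton {M N : PersMod k P} (f : Hom M N) {x : P}
    (hs : Subsingleton (N.carrier x)) : Subsingleton ((cokerMod f).carrier x) :=
  Function.Surjective.subsingleton (Submodule.Quotient.mk_surjective _)

end FreeLemmas

section CokerGridDet

variable {k : Type} [Field k] {n : ℕ}

theorem gridDet_coker {ι κ : Type} [Fintype ι] [Fintype κ] (gp : ι → Pt n) (rp : κ → Pt n)
    (f : Hom (fdsum fun j => Pmod k (rp j)) (fdsum fun i => Pmod k (gp i))) :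
    GridDet ((Finset.image (fun p : ι × Fin n => gp p.1 p.2) Finset.univ) ∪
      (Finset.image (fun p : κ × Fin n => rp p.1 p.2) Finset.univ)) (cokerMod f) := by
  set S := (Finset.image (fun p : ι × Fin n => gp p.1 p.2) Finset.univ) ∪
      (Finset.image (fun p : κ × Fin n => rp p.1 p.2) Finset.univ) with hS
  have hg : ∀ (i : ι) (i' : Fin n), gp i i' ∈ S := fun i i' =>
    Finset.mem_union_left _ (Finset.mem_image.mpr ⟨(i, i'), Finset.mem_univ _, rfl⟩)
  have hr : ∀ (j : κ) (i' : Fin n), rp j i' ∈ S := fun j i' =>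
    Finset.mem_union_right _ (Finset.mem_image.mpr ⟨(j, i'), Finset.mem_univ _, rfl⟩)
  constructor
  · intro r hd
    refine coker_map_bijective f _ ?_ ?_
    · exact fdsum_map_bijective _ _ fun j =>
        pmod_map_bijective _ (grid_le_iff (fun i' => hr j i') hd).symm
    · exact fdsum_map_bijective _ _ fun i =>
        pmod_map_bijective _ (grid_le_iff (fun i' => hg i i') hd).symm
  · intro r hnd
    refine coker_subsingleton f (fdsum_subsingleton _ fun i => pmod_subsingleton fun hle => ?_)
    exact hnd (finDom_of_le (fun i' => hg i i') hle)

end CokerGridDet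

end PersMod
namespace PersMod

section Presentation

variable {k : Type} [Field k] {n : ℕ} (S : Finset ℝ) (M : PersMod k (Pt n))

/-- The grid point of `Sⁿ` associated to a function `Fin n → S`. -/
def gPt (g : Fin n → ↥S) : Pt n := fun i => (g i : ℝ)

lemma gPt_mem (g : Fin n → ↥S) (i : Fin n) : gPt S g i ∈ S := (g i).2

/-- The dimension of `M` at a grid point. -/
noncomputable def dimAt (g : Fin n → ↥S) : ℕ := Module.finrank k (M.carrier (gPt S g))

/-- A choice of basis of `M` at each grid point. -/
noncomputable def basAt (g : Fin n → ↥S) :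
    Module.Basis (Fin (dimAt S M g)) k (M.carrier (gPt S g)) :=
  Module.finBasis k _

/-- The index type of generators. -/
abbrev GenIdx : Type := Σ g : Fin n → ↥S, Fin (dimAt S M g)

/-- The index type of relators. -/
abbrev RelIdx : Type := Σ gg : (Fin n → ↥S) × (Fin n → ↥S), Fin (dimAt S M gg.1)

/-- The point of a generator. -/
def gpF (i : GenIdx S M) : Pt n := gPt S i.1

/-- The point of a relator. -/
def rpF (j : RelIdx S M) : Pt n := gPt S j.1.2

/-- The free module on the generators. -/
@[reducible] noncomputable def FI : PersMod k (Pt n) := fdsum fun i => Pmod k (gpF S M i)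

/-- The free module on the relators. -/
@[reducible] noncomputable def FJ : PersMod k (Pt n) := fdsum fun j => Pmod k (rpF S M j)

lemma one_mem_pSub {q r : Pt n} (h : q ≤ r) : (1 : k) ∈ pSub k q r := by
  rw [pSub_top h]; trivial

/-- The generator `i` viewed in `(FI)(r)` for `gpF i ≤ r`. -/
noncomputable def unitF (i : GenIdx S M) (r : Pt n) (h : gpF S M i ≤ r) :
    (FI S M).carrier r :=
  Pi.single i ⟨1, one_mem_pSub h⟩

/-- The relator basis vector `j` viewed in `(FJ)(r)` for `rpF j ≤ r`. -/
noncomputable def unitJ (j : RelIdx S M) (r : Pt n) (h : rpF S M j ≤ r) :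
    (FJ S M).carrier r :=
  Pi.single j ⟨1, one_mem_pSub h⟩

lemma unitF_val (i : GenIdx S M) (r : Pt n) (h : gpF S M i ≤ r) (i' : GenIdx S M) :
    ((unitF S M i r h) i').1 = if i' = i then (1 : k) else 0 := by
  unfold unitF
  by_cases he : i' = i
  · subst he; rw [if_pos rfl]; erw [Pi.single_eq_same]
  · rw [if_neg he]; erw [Pi.single_eq_of_ne he]; rfl

lemma unitJ_val (j : RelIdx S M) (r : Pt n) (h : rpF S M j ≤ r) (j' : RelIdx S M) :
    ((unitJ S M j r h) j').1 = if j' = j then (1 : k) else 0 := by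
  unfold unitJ
  by_cases he : j' = j
  · subst he; rw [if_pos rfl]; erw [Pi.single_eq_same]
  · rw [if_neg he]; erw [Pi.single_eq_of_ne he]; rfl

lemma pmod_map_val {q : Pt n} {x y : Pt n} (h : x ≤ y) (v : (Pmod k q).carrier x) :
    (((Pmod k q).map h) v).1 = v.1 := rfl

lemma mapF_unit (i : GenIdx S M) {r r' : Pt n} (h : gpF S M i ≤ r) (h2 : r ≤ r') :
    (FI S M).map h2 (unitF S M i r h) = unitF S M i r' (h.trans h2) := by
  funext i'
  apply Subtype.ext
  show (((FI S M).map h2 (unitF S M i r h)) i').1 = _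
  rw [fdsum_map_apply, pmod_map_val, unitF_val, unitF_val]

lemma pSub_val_eq_zero {q r : Pt n} (hq : ¬ q ≤ r) (v : ↥(pSub k q r)) : v.1 = 0 := by
  refine (Submodule.mem_bot k).mp ?_
  rw [← pSub_bot hq]
  exact v.2

/-- The image in `M(finSup S r)` of the generator `i`. -/
noncomputable def wVec (i : GenIdx S M) (r : Pt n) : M.carrier (finSup S r) :=
  letI := Classical.propDecidable (gpF S M i ≤ finSup S r)
  if h : gpF S M i ≤ finSup S r then M.map h (basAt S M i.1 i.2) else 0

/-- The evaluation map `(FI)(r) → M(finSup S r)`. -/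
noncomputable def sigmaF (r : Pt n) : (FI S M).carrier r →ₗ[k] M.carrier (finSup S r) :=
  ∑ i, (LinearMap.toSpanSingleton k _ (wVec S M i r)) ∘ₗ
    (pSub k (gpF S M i) r).subtype ∘ₗ (LinearMap.proj i)

lemma sigmaF_apply (r : Pt n) (x : (FI S M).carrier r) :
    sigmaF S M r x = ∑ i, (x i).1 • wVec S M i r := by
  unfold sigmaF
  rw [LinearMap.sum_apply]
  exact Finset.sum_congr rfl fun i _ => rfl

lemma sigmaF_unitF (i : GenIdx S M) (r : Pt n) (h : gpF S M i ≤ r) :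
    sigmaF S M r (unitF S M i r h) = wVec S M i r := by
  rw [sigmaF_apply]
  rw [Finset.sum_eq_single i]
  · rw [unitF_val, if_pos rfl, one_smul]
  · intro i' _ hne
    rw [unitF_val, if_neg hne, zero_smul]
  · intro hmem
    exact absurd (Finset.mem_univ i) hmem

lemma sigmaF_natural {r r' : Pt n} (h : r ≤ r') (hd : finDom S r) (x : (FI S M).carrier r) :
    sigmaF S M r' ((FI S M).map h x) = M.map (finSup_mono hd h) (sigmaF S M r x) := by
  rw [sigmaF_apply, sigmaF_apply, map_sum]
  refine Finset.sum_congr rfl fun i _ => ?_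
  have hval : (((FI S M).map h x) i).1 = (x i).1 := by
    rw [fdsum_map_apply, pmod_map_val]
  rw [hval, map_smul]
  by_cases hi : gpF S M i ≤ r
  · have hi1 : gpF S M i ≤ finSup S r := le_finSup (fun i' => gPt_mem S i.1 i') hi
    have hi2 : gpF S M i ≤ finSup S r' := hi1.trans (finSup_mono hd h)
    have hw : wVec S M i r' = M.map (finSup_mono hd h) (wVec S M i r) := by
      unfold wVec
      rw [dif_pos hi1, dif_pos hi2]
      exact LinearMap.congr_fun (M.map_comp hi1 (finSup_mono hd h)) _
    rw [hw]
  · erw [pSub_val_eq_zero hi, zero_smul, zero_smul]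

end Presentation

end PersMod
namespace PersMod

section Presentation2

variable {k : Type} [Field k] {n : ℕ} (S : Finset ℝ) (M : PersMod k (Pt n))

/-- The relator element attached to a relator index. -/
noncomputable def relElt (j : RelIdx S M) : (FI S M).carrier (rpF S M j) :=
  letI := Classical.propDecidable (gPt S j.1.1 ≤ gPt S j.1.2)
  if h : gPt S j.1.1 ≤ gPt S j.1.2 then
    unitF S M ⟨j.1.1, j.2⟩ (rpF S M j) h -
      ∑ b', ((basAt S M j.1.2).repr (M.map h (basAt S M j.1.1 j.2)) b') •
        unitF S M ⟨j.1.2, b'⟩ (rpF S M j) le_rfl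
  else 0

/-- The relator element transported to an arbitrary point. -/
noncomputable def relVec (j : RelIdx S M) (r : Pt n) : (FI S M).carrier r :=
  letI := Classical.propDecidable (rpF S M j ≤ r)
  if h : rpF S M j ≤ r then (FI S M).map h (relElt S M j) else 0

/-- The component at `r` of the relation morphism. -/
noncomputable def fApp (r : Pt n) : (FJ S M).carrier r →ₗ[k] (FI S M).carrier r :=
  ∑ j, (LinearMap.toSpanSingleton k _ (relVec S M j r)) ∘ₗ
    (pSub k (rpF S M j) r).subtype ∘ₗ (LinearMap.proj j)

lemma fApp_apply (r : Pt n) (y : (FJ S M).carrier r) :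
    fApp S M r y = ∑ j, (y j).1 • relVec S M j r := by
  unfold fApp
  rw [LinearMap.sum_apply]
  exact Finset.sum_congr rfl fun j _ => rfl

lemma fApp_unitJ (j : RelIdx S M) (r : Pt n) (h : rpF S M j ≤ r) :
    fApp S M r (unitJ S M j r h) = relVec S M j r := by
  rw [fApp_apply]
  rw [Finset.sum_eq_single j]
  · rw [unitJ_val, if_pos rfl, one_smul]
  · intro j' _ hne
    rw [unitJ_val, if_neg hne, zero_smul]
  · intro hmem
    exact absurd (Finset.mem_univ j) hmem

/-- The relation morphism. -/
noncomputable def fPres : Hom (FJ S M) (FI S M) where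
  app r := fApp S M r
  natural {r r'} h := by
    refine LinearMap.ext fun y => ?_
    show fApp S M r' ((FJ S M).map h y) = (FI S M).map h (fApp S M r y)
    rw [fApp_apply, fApp_apply, map_sum]
    refine Finset.sum_congr rfl fun j _ => ?_
    have hval : (((FJ S M).map h y) j).1 = (y j).1 := by
      rw [fdsum_map_apply, pmod_map_val]
    rw [hval, map_smul]
    by_cases hj : rpF S M j ≤ r
    · have hv : relVec S M j r' = (FI S M).map h (relVec S M j r) := by
        unfold relVec
        rw [dif_pos hj, dif_pos (hj.trans h), ← LinearMap.comp_apply, ← (FI S M).map_comp]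
      rw [hv]
    · erw [pSub_val_eq_zero hj, zero_smul, zero_smul]

lemma sigmaF_relElt (j : RelIdx S M) :
    sigmaF S M (rpF S M j) (relElt S M j) = 0 := by
  unfold relElt
  by_cases hle : gPt S j.1.1 ≤ gPt S j.1.2
  · rw [dif_pos hle, map_sub, map_sum]
    have hq : rpF S M j ≤ rpF S M j := le_rfl
    have h1 : sigmaF S M (rpF S M j) (unitF S M ⟨j.1.1, j.2⟩ (rpF S M j) hle) =
        wVec S M ⟨j.1.1, j.2⟩ (rpF S M j) := sigmaF_unitF S M _ _ _
    rw [h1]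
    have h2 : ∀ b', sigmaF S M (rpF S M j)
        (((basAt S M j.1.2).repr (M.map hle (basAt S M j.1.1 j.2)) b') •
          unitF S M ⟨j.1.2, b'⟩ (rpF S M j) le_rfl) =
        ((basAt S M j.1.2).repr (M.map hle (basAt S M j.1.1 j.2)) b') •
          wVec S M ⟨j.1.2, b'⟩ (rpF S M j) := fun b' => by
      erw [map_smul, sigmaF_unitF]
    rw [Finset.sum_congr rfl fun b' _ => h2 b']
    have hw1 : gpF S M ⟨j.1.1, j.2⟩ ≤ finSup S (rpF S M j) :=
      le_finSup (fun i' => gPt_mem S j.1.1 i') hle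
    have hw2 : gPt S j.1.2 ≤ finSup S (rpF S M j) :=
      le_finSup (fun i' => gPt_mem S j.1.2 i') le_rfl
    have e1 : wVec S M ⟨j.1.1, j.2⟩ (rpF S M j) =
        M.map hw2 (M.map hle (basAt S M j.1.1 j.2)) := by
      unfold wVec
      rw [dif_pos hw1, ← LinearMap.comp_apply, ← M.map_comp]
      rfl
    have e2 : ∀ b', ((basAt S M j.1.2).repr (M.map hle (basAt S M j.1.1 j.2)) b') •
          wVec S M ⟨j.1.2, b'⟩ (rpF S M j) =
        M.map hw2 (((basAt S M j.1.2).repr (M.map hle (basAt S M j.1.1 j.2)) b') •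
          basAt S M j.1.2 b') := by
      intro b'
      have hw2' : gpF S M ⟨j.1.2, b'⟩ ≤ finSup S (rpF S M j) := hw2
      unfold wVec
      rw [dif_pos hw2', map_smul]
      rfl
    rw [e1, Finset.sum_congr rfl fun b' _ => e2 b', ← map_sum,
      (basAt S M j.1.2).sum_repr (M.map hle (basAt S M j.1.1 j.2)), sub_self]
  · rw [dif_neg hle, map_zero]

end Presentation2

end PersMod
namespace PersMod

section Presentation3

variable {k : Type} [Field k] {n : ℕ} (S : Finset ℝ) (M : PersMod k (Pt n))

lemma sigmaF_relVec (j : RelIdx S M) (r : Pt n) :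
    sigmaF S M r (relVec S M j r) = 0 := by
  unfold relVec
  by_cases hj : rpF S M j ≤ r
  · rw [dif_pos hj]
    have hdq : finDom S (rpF S M j) :=
      finDom_of_le (fun i' => gPt_mem S j.1.2 i') le_rfl
    rw [sigmaF_natural S M hj hdq, sigmaF_relElt, map_zero]
  · rw [dif_neg hj, map_zero]

lemma sigmaF_comp_fApp (r : Pt n) (y : (FJ S M).carrier r) :
    sigmaF S M r (fApp S M r y) = 0 := by
  rw [fApp_apply, map_sum]
  rw [Finset.sum_congr rfl fun j _ => by rw [map_smul, sigmaF_relVec, smul_zero]]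
  exact Finset.sum_const_zero

/-- The component at `r` of the projection morphism onto the restriction-extension. -/
noncomputable def piApp (r : Pt n) :
    (FI S M).carrier r →ₗ[k] (finRestExt S M).carrier r :=
  @dite _ (finDom S r) (Classical.propDecidable _)
    (fun hd => LinearMap.codRestrict (finExtSub S M r) (sigmaF S M r)
      (fun x => by rw [finExtSub, if_pos hd]; trivial))
    (fun _ => 0)

lemma piApp_val {r : Pt n} (hd : finDom S r) (x : (FI S M).carrier r) :
    ((piApp S M r) x).1 = sigmaF S M r x := by
  erw [piApp, dif_pos hd]
  rfl

lemma piApp_neg {r : Pt n} (hnd : ¬ finDom S r) : piApp S M r = 0 := by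
  erw [piApp, dif_neg hnd]

lemma fI_zero_of_not_finDom {r : Pt n} (hnd : ¬ finDom S r) (x : (FI S M).carrier r) :
    x = 0 := by
  funext i
  apply Subtype.ext
  have hi : ¬ gpF S M i ≤ r := fun hle => hnd (finDom_of_le (fun i' => gPt_mem S i.1 i') hle)
  erw [pSub_val_eq_zero hi]
  rfl

/-- The projection morphism `FI → M_𝒫`. -/
noncomputable def piHom : Hom (FI S M) (finRestExt S M) where
  app r := piApp S M r
  natural {r r'} h := by
    refine LinearMap.ext fun x => ?_
    show piApp S M r' ((FI S M).map h x) = (finRestExt S M).map h (piApp S M r x)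
    by_cases hd : finDom S r
    · have hd' := finDom_mono hd h
      apply Subtype.ext
      rw [piApp_val S M hd', finRestExt_map_pos M h hd, piApp_val S M hd,
        sigmaF_natural S M h hd x]
    · rw [fI_zero_of_not_finDom S M hd x]
      simp only [map_zero]

lemma piApp_comp_fApp (r : Pt n) (y : (FJ S M).carrier r) :
    piApp S M r (fApp S M r y) = 0 := by
  by_cases hd : finDom S r
  · apply Subtype.ext
    rw [piApp_val S M hd, sigmaF_comp_fApp]
    rfl
  · rw [piApp_neg S M hd]
    rfl

/-- The distinguished grid function representing `finSup S r`. -/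
noncomputable def gsup (r : Pt n) (hd : finDom S r) : Fin n → ↥S :=
  fun i => ⟨finSup S r i, finSup_mem hd i⟩

lemma gPt_gsup (r : Pt n) (hd : finDom S r) : gPt S (gsup S r hd) = finSup S r := rfl

lemma wVec_gsup {r : Pt n} (hd : finDom S r) (b : Fin (dimAt S M (gsup S r hd))) :
    wVec S M ⟨gsup S r hd, b⟩ r = basAt S M (gsup S r hd) b := by
  have hws : gpF S M ⟨gsup S r hd, b⟩ ≤ finSup S r := le_of_eq (gPt_gsup S r hd)
  unfold wVec
  rw [dif_pos hws]
  have hid : M.map hws = LinearMap.id := M.map_id (finSup S r)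
  rw [hid]
  rfl

lemma piApp_surjective {r : Pt n} (hd : finDom S r) :
    Function.Surjective (piApp S M r) := by
  rintro ⟨m, hm⟩
  have hle : gPt S (gsup S r hd) ≤ r := finSup_le hd
  refine ⟨∑ b, ((basAt S M (gsup S r hd)).repr m b) • unitF S M ⟨gsup S r hd, b⟩ r hle, ?_⟩
  apply Subtype.ext
  rw [piApp_val S M hd, map_sum]
  erw [Finset.sum_congr rfl fun b _ => by erw [map_smul, sigmaF_unitF, wVec_gsup S M hd b]]
  exact (basAt S M (gsup S r hd)).sum_repr m

end Presentation3

end PersMod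
namespace PersMod

section Presentation4

variable {k : Type} [Field k] {n : ℕ} (S : Finset ℝ) (M : PersMod k (Pt n))

lemma x_decomp {r : Pt n} (x : (FI S M).carrier r) :
    x = ∑ i, @dite _ (gpF S M i ≤ r) (Classical.propDecidable _)
      (fun hi => (x i).1 • unitF S M i r hi) (fun _ => 0) := by
  conv_lhs => rw [← Finset.univ_sum_single x]
  refine Finset.sum_congr rfl fun i _ => ?_
  by_cases hi : gpF S M i ≤ r
  · rw [dif_pos hi]
    unfold unitF
    erw [← Pi.single_smul]
    have he : ((x i).1 • (⟨1, one_mem_pSub hi⟩ : ↥(pSub k (gpF S M i) r))) = x i := by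
      apply Subtype.ext
      show (x i).1 • (1 : k) = (x i).1
      rw [smul_eq_mul, mul_one]
    erw [he]
  · erw [dif_neg hi, show x i = 0 from Subtype.ext (by erw [pSub_val_eq_zero hi]; rfl),
      Pi.single_zero]; rfl

/-- Coefficients of a generator expressed in the basis at the grid supremum. -/
noncomputable def cCoef {r : Pt n} (hd : finDom S r) (i : GenIdx S M)
    (hi : gpF S M i ≤ r) (b : Fin (dimAt S M (gsup S r hd))) : k :=
  (basAt S M (gsup S r hd)).repr
    (M.map (le_finSup (fun i' => gPt_mem S i.1 i') hi :
      gPt S i.1 ≤ gPt S (gsup S r hd)) (basAt S M i.1 i.2)) b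

lemma relVec_eq (j : RelIdx S M) (r : Pt n) (hj : rpF S M j ≤ r)
    (hle : gPt S j.1.1 ≤ gPt S j.1.2) :
    relVec S M j r = unitF S M ⟨j.1.1, j.2⟩ r
        ((hle : gpF S M ⟨j.1.1, j.2⟩ ≤ rpF S M j).trans hj) -
      ∑ b, ((basAt S M j.1.2).repr (M.map hle (basAt S M j.1.1 j.2)) b) •
        unitF S M ⟨j.1.2, b⟩ r ((le_rfl : gpF S M ⟨j.1.2, b⟩ ≤ rpF S M j).trans hj) := by
  unfold relVec
  rw [dif_pos hj]
  unfold relElt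
  rw [dif_pos hle, map_sub, map_sum,
    mapF_unit S M ⟨j.1.1, j.2⟩ (r := rpF S M j) (r' := r) hle hj]
  congr 1
  refine Finset.sum_congr rfl fun b _ => ?_
  rw [map_smul, mapF_unit S M ⟨j.1.2, b⟩ (r := rpF S M j) (r' := r) le_rfl hj]

lemma relVec_jdx {r : Pt n} (hd : finDom S r) (i : GenIdx S M) (hi : gpF S M i ≤ r) :
    relVec S M ⟨(i.1, gsup S r hd), i.2⟩ r =
      unitF S M i r hi - ∑ b, (cCoef S M hd i hi b) •
        unitF S M ⟨gsup S r hd, b⟩ r (finSup_le hd) :=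
  relVec_eq S M ⟨(i.1, gsup S r hd), i.2⟩ r (finSup_le hd)
    (le_finSup (fun i' => gPt_mem S i.1 i') hi)

/-- The canonical preimage witness for the kernel computation. -/
noncomputable def zElt {r : Pt n} (hd : finDom S r) (x : (FI S M).carrier r) :
    (FJ S M).carrier r :=
  ∑ i, @dite _ (gpF S M i ≤ r) (Classical.propDecidable _)
    (fun hi => (x i).1 • unitJ S M ⟨(i.1, gsup S r hd), i.2⟩ r (finSup_le hd)) (fun _ => 0)

lemma fApp_zElt {r : Pt n} (hd : finDom S r) (x : (FI S M).carrier r) :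
    fApp S M r (zElt S M hd x) = x -
      ∑ b, (∑ i, @dite _ (gpF S M i ≤ r) (Classical.propDecidable _)
          (fun hi => (x i).1 * cCoef S M hd i hi b) (fun _ => 0)) •
        unitF S M ⟨gsup S r hd, b⟩ r (finSup_le hd) := by
  unfold zElt
  rw [map_sum]
  have h1 : ∀ i : GenIdx S M, fApp S M r (@dite _ (gpF S M i ≤ r) (Classical.propDecidable _)
      (fun hi => (x i).1 • unitJ S M ⟨(i.1, gsup S r hd), i.2⟩ r (finSup_le hd)) (fun _ => 0)) =
      (@dite _ (gpF S M i ≤ r) (Classical.propDecidable _)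
        (fun hi => (x i).1 • unitF S M i r hi) (fun _ => 0)) -
      ∑ b, (@dite _ (gpF S M i ≤ r) (Classical.propDecidable _)
        (fun hi => (x i).1 * cCoef S M hd i hi b) (fun _ => 0)) •
        unitF S M ⟨gsup S r hd, b⟩ r (finSup_le hd) := by
    intro i
    by_cases hi : gpF S M i ≤ r
    · erw [dif_pos hi, dif_pos hi, map_smul, fApp_unitJ, relVec_jdx S M hd i hi, smul_sub,
        Finset.smul_sum]
      congr 1
      refine Finset.sum_congr rfl fun b _ => ?_
      rw [dif_pos hi, smul_smul]
    · rw [dif_neg hi, dif_neg hi, map_zero]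
      rw [Finset.sum_congr rfl fun b _ => by rw [dif_neg hi, zero_smul],
        Finset.sum_const_zero, sub_zero]
  rw [Finset.sum_congr rfl fun i _ => h1 i, Finset.sum_sub_distrib]
  congr 1
  · exact (x_decomp S M x).symm
  · rw [Finset.sum_comm]
    exact Finset.sum_congr rfl fun b _ => (Finset.sum_smul).symm

lemma ker_piApp {r : Pt n} (x : (FI S M).carrier r) (hx : piApp S M r x = 0) :
    x ∈ LinearMap.range (fApp S M r) := by
  by_cases hd : finDom S r
  · have hsig : sigmaF S M r x = 0 := by
      rw [← piApp_val S M hd x, hx]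
      rfl
    have hfz := fApp_zElt S M hd x
    have hsT : sigmaF S M r (∑ b, (∑ i, @dite _ (gpF S M i ≤ r) (Classical.propDecidable _)
          (fun hi => (x i).1 * cCoef S M hd i hi b) (fun _ => 0)) •
        unitF S M ⟨gsup S r hd, b⟩ r (finSup_le hd)) = 0 := by
      have hz := congrArg (fun t => sigmaF S M r t) hfz
      simp only [sigmaF_comp_fApp S M r] at hz
      rw [map_sub, hsig, zero_sub] at hz
      exact neg_eq_zero.mp hz.symm
    have hbas : ∑ b, (∑ i, @dite _ (gpF S M i ≤ r) (Classical.propDecidable _)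
          (fun hi => (x i).1 * cCoef S M hd i hi b) (fun _ => 0)) •
        basAt S M (gsup S r hd) b = 0 := by
      erw [← hsT, map_sum]
      exact (Finset.sum_congr rfl fun b _ => by
        erw [map_smul, sigmaF_unitF, wVec_gsup S M hd b]; rfl).symm
    have hC := Fintype.linearIndependent_iff.mp
      (basAt S M (gsup S r hd)).linearIndependent _ hbas
    refine ⟨zElt S M hd x, ?_⟩
    rw [hfz, Finset.sum_congr rfl fun b _ => by rw [hC b, zero_smul],
      Finset.sum_const_zero, sub_zero]
  · rw [fI_zero_of_not_finDom S M hd x]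
    exact zero_mem _

end Presentation4

end PersMod
namespace PersMod

section Presentation5

variable {k : Type} [Field k] {n : ℕ} (S : Finset ℝ) (M : PersMod k (Pt n))

/-- The induced map from the cokernel of the presentation to the restriction-extension. -/
noncomputable def phiApp (r : Pt n) :
    (cokerMod (fPres S M)).carrier r →ₗ[k] (finRestExt S M).carrier r :=
  Submodule.liftQ _ (piApp S M r) (by
    rintro v ⟨y, rfl⟩
    exact LinearMap.mem_ker.mpr (piApp_comp_fApp S M r y))

lemma phiApp_mk (r : Pt n) (w : (FI S M).carrier r) :
    phiApp S M r (Submodule.Quotient.mk w) = piApp S M r w := rfl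

/-- The induced morphism from the cokernel of the presentation. -/
noncomputable def phiHom : Hom (cokerMod (fPres S M)) (finRestExt S M) where
  app r := phiApp S M r
  natural {r r'} h := by
    refine LinearMap.ext fun v => ?_
    obtain ⟨w, rfl⟩ := Submodule.Quotient.mk_surjective _ v
    show phiApp S M r' ((cokerMod (fPres S M)).map h (Submodule.Quotient.mk w)) =
      (finRestExt S M).map h (phiApp S M r (Submodule.Quotient.mk w))
    rw [coker_map_mk (fPres S M) h w, phiApp_mk, phiApp_mk]
    exact LinearMap.congr_fun ((piHom S M).natural h) w

lemma phiApp_bijective (r : Pt n) : Function.Bijective (phiApp S M r) := by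
  constructor
  · intro a b hab
    obtain ⟨va, rfl⟩ := Submodule.Quotient.mk_surjective _ a
    obtain ⟨vb, rfl⟩ := Submodule.Quotient.mk_surjective _ b
    rw [phiApp_mk, phiApp_mk] at hab
    have h0 : piApp S M r (va - vb) = 0 := by rw [map_sub, hab, sub_self]
    exact (Submodule.Quotient.eq _).mpr (ker_piApp S M (va - vb) h0)
  · intro z
    by_cases hd : finDom S r
    · obtain ⟨w, hw⟩ := piApp_surjective S M hd z
      exact ⟨Submodule.Quotient.mk w, by rw [phiApp_mk]; exact hw⟩
    · haveI : Subsingleton ((finRestExt S M).carrier r) := finExtSub_subsingleton M hd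
      exact ⟨0, Subsingleton.elim _ _⟩

theorem fp_finRestExt : FinitelyPresentable (finRestExt S M) :=
  ⟨GenIdx S M, RelIdx S M, inferInstance, inferInstance, gpF S M, rpF S M, fPres S M,
    isomSymm (isomOfBijective (phiHom S M) (phiApp_bijective S M))⟩

end Presentation5

theorem fp_of_isom {k : Type} [Field k] {P : Type} [PartialOrder P] {M N : PersMod k P}
    (h : Isom M N) (hN : FinitelyPresentable N) : FinitelyPresentable M := by
  obtain ⟨ι, κ, i1, i2, gp, rp, f, hi⟩ := hN
  exact ⟨ι, κ, i1, i2, gp, rp, f, isomTrans h hi⟩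

end PersMod

open PersMod

/-- A persistence module `M : ℝⁿ → vec` is finitely presentable if and only if it is
isomorphic to its restriction-extension along some finite grid. -/
theorem finitelyPresentable_iff_finite_grid (k : Type) [Field k] (n : ℕ) (hn : 1 ≤ n)
    (M : PersMod k (Pt n)) :
    M.FinitelyPresentable ↔ ∃ S : Finset ℝ, Isom M (finRestExt S M) := by
  constructor
  · rintro ⟨ι, κ, i1, i2, gp, rp, f, hiso⟩
    refine ⟨(Finset.image (fun p : ι × Fin n => gp p.1 p.2) Finset.univ) ∪
      (Finset.image (fun p : κ × Fin n => rp p.1 p.2) Finset.univ), ?_⟩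
    exact isom_restExt_of_gridDet (gridDet_of_isom hiso (gridDet_coker gp rp f))
  · rintro ⟨S, hiso⟩
    exact fp_of_isom hiso (fp_finRestExt S M)
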